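/- arXiv:1407.5409 — 2 statements merged into one kernel-verified Lean document; each statement's English description precedes it below -/
import Mathlib

section
/- Let G be a d-regular vertex-transitive bipartite graph on 2n vertices and (u,v) an edge of G. Then m_n(G)·m_{n-2}(G-{u,v}) + m_{n-1}(G)·m_{n-1}(G-{u,v}) ≥ (m_{n-1}(G)/n)². -/
open scoped Classical
open Finset

/-- Number of matchings with exactly `k` edges in `G`. -/
noncomputable def numMatchings {V : Type*} [Fintype V] (G : SimpleGraph V) (k : ℕ) : ℕ :=
  (G.edgeFinset.powerset.filter (fun M => M.card = k ∧
    ∀ e ∈ M, ∀ f ∈ M, e ≠ f → ∀ v : V, ¬(v ∈ e ∧ v ∈ f))).card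

/-- Matching generating function `M(G,t) = Σ_k m_k(G) t^k`. -/
noncomputable def matchGen {V : Type*} [Fintype V] (G : SimpleGraph V) (t : ℝ) : ℝ :=
  ∑ k ∈ Finset.range (Fintype.card V + 1), (numMatchings G k : ℝ) * t ^ k

/-- Derivative `M'(G,t) = Σ_k k·m_k(G) t^(k-1)`. -/
noncomputable def matchGenDeriv {V : Type*} [Fintype V] (G : SimpleGraph V) (t : ℝ) : ℝ :=
  ∑ k ∈ Finset.range (Fintype.card V + 1), (k : ℝ) * (numMatchings G k : ℝ) * t ^ (k - 1)

/-- The graph obtained from `G` by deleting all vertices in `S` (kept as isolated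
vertices, which does not affect matchings). -/
def deleteVerts {V : Type*} (G : SimpleGraph V) (S : Set V) : SimpleGraph V where
  Adj a b := G.Adj a b ∧ a ∉ S ∧ b ∉ S
  symm := ⟨fun _ _ h => ⟨h.1.symm, h.2.2, h.2.1⟩⟩
  loopless := ⟨fun _ h => G.irrefl h.1⟩

open scoped symmDiff

namespace Stmt14Aux

set_option linter.unusedSectionVars false
set_option maxHeartbeats 1600000

variable {V : Type*} [Fintype V]

/-- matching predicate -/
def IsMat (M : Finset (Sym2 V)) : Prop :=
  ∀ e ∈ M, ∀ f ∈ M, e ≠ f → ∀ v : V, ¬(v ∈ e ∧ v ∈ f)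

noncomputable def mSet (G : SimpleGraph V) (k : ℕ) : Finset (Finset (Sym2 V)) :=
  G.edgeFinset.powerset.filter (fun M => M.card = k ∧ IsMat M)

lemma numMatchings_eq (G : SimpleGraph V) (k : ℕ) : numMatchings G k = (mSet G k).card := by
  unfold numMatchings
  refine congrArg Finset.card ?_
  ext M
  simp [mSet, IsMat, numMatchings]

lemma mem_mSet {G : SimpleGraph V} {k : ℕ} {M : Finset (Sym2 V)} :
    M ∈ mSet G k ↔ M ⊆ G.edgeFinset ∧ M.card = k ∧ IsMat M := by
  simp [mSet, Finset.mem_filter, Finset.mem_powerset, and_assoc]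

lemma mem_edgeFinset_deleteVerts (G : SimpleGraph V) (S : Set V) (e : Sym2 V) :
    e ∈ (deleteVerts G S).edgeFinset ↔ e ∈ G.edgeFinset ∧ ∀ w ∈ e, w ∉ S := by
  induction e using Sym2.ind with
  | _ a b =>
    simp only [SimpleGraph.mem_edgeFinset, SimpleGraph.mem_edgeSet]
    show (G.Adj a b ∧ a ∉ S ∧ b ∉ S) ↔ _
    constructor
    · rintro ⟨h, ha, hb⟩
      refine ⟨h, ?_⟩
      intro w hw
      rcases Sym2.mem_iff.mp hw with rfl | rfl <;> assumption
    · rintro ⟨h, hw⟩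
      exact ⟨h, hw a (Sym2.mem_mk_left a b), hw b (Sym2.mem_mk_right a b)⟩

lemma mem_mSet_deleteVerts {G : SimpleGraph V} {S : Set V} {k : ℕ} {M : Finset (Sym2 V)} :
    M ∈ mSet (deleteVerts G S) k ↔ M ∈ mSet G k ∧ ∀ e ∈ M, ∀ w ∈ e, w ∉ S := by
  simp only [mem_mSet]
  constructor
  · rintro ⟨hsub, hc, hm⟩
    refine ⟨⟨fun e he => ((mem_edgeFinset_deleteVerts G S e).mp (hsub he)).1, hc, hm⟩,
      fun e he => ((mem_edgeFinset_deleteVerts G S e).mp (hsub he)).2⟩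
  · rintro ⟨⟨hsub, hc, hm⟩, hS⟩
    exact ⟨fun e he => (mem_edgeFinset_deleteVerts G S e).mpr ⟨hsub he, hS e he⟩, hc, hm⟩

lemma mSet_deleteVerts_single (G : SimpleGraph V) (u : V) (k : ℕ) :
    mSet (deleteVerts G ({u} : Set V)) k = (mSet G k).filter (fun M => ∀ e ∈ M, u ∉ e) := by
  ext M
  rw [Finset.mem_filter, mem_mSet_deleteVerts]
  constructor
  · rintro ⟨h1, h2⟩
    exact ⟨h1, fun e he hu => h2 e he u hu rfl⟩
  · rintro ⟨h1, h2⟩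
    refine ⟨h1, fun e he w hw hws => ?_⟩
    rw [Set.mem_singleton_iff] at hws
    subst hws
    exact h2 e he hw

lemma ends_card {G : SimpleGraph V} {e : Sym2 V} (he : e ∈ G.edgeFinset) :
    (Finset.univ.filter (fun w => w ∈ e)).card = 2 := by
  induction e using Sym2.ind with
  | _ a b =>
    have hab : a ≠ b := by
      intro h
      subst h
      exact G.irrefl (G.mem_edgeSet.mp (SimpleGraph.mem_edgeFinset.mp he))
    have : Finset.univ.filter (fun w => w ∈ (s(a, b) : Sym2 V)) = {a, b} := by
      ext w
      simp [Sym2.mem_iff]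
    rw [this, Finset.card_insert_of_notMem (by simp [hab]), Finset.card_singleton]

noncomputable def coverSet (M : Finset (Sym2 V)) : Finset V :=
  Finset.univ.filter (fun w => ∃ e ∈ M, w ∈ e)

lemma coverSet_card {G : SimpleGraph V} {M : Finset (Sym2 V)} (hsub : M ⊆ G.edgeFinset)
    (hM : IsMat M) : (coverSet M).card = 2 * M.card := by
  have h1 : coverSet M = M.biUnion (fun e => Finset.univ.filter (fun w => w ∈ e)) := by
    ext w
    simp [coverSet]
  rw [h1, Finset.card_biUnion, Finset.sum_congr rfl (fun e he => ends_card (hsub he)),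
    Finset.sum_const, smul_eq_mul, mul_comm]
  intro e he f hf hne
  rw [Function.onFun, Finset.disjoint_filter]
  intro w _ hwe hwf
  exact hM e he f hf hne w ⟨hwe, hwf⟩

lemma isMat_card_le {G : SimpleGraph V} {M : Finset (Sym2 V)} (hsub : M ⊆ G.edgeFinset)
    (hM : IsMat M) : 2 * M.card ≤ Fintype.card V := by
  rw [← coverSet_card hsub hM]
  exact (Finset.card_le_card (Finset.subset_univ _)).trans_eq (Finset.card_univ)

lemma isMat_card_le_avoid {G : SimpleGraph V} {M : Finset (Sym2 V)} (hsub : M ⊆ G.edgeFinset)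
    (hM : IsMat M) {u : V} (hu : ∀ e ∈ M, u ∉ e) : 2 * M.card + 1 ≤ Fintype.card V := by
  rw [← coverSet_card hsub hM]
  have hss : coverSet M ⊆ Finset.univ.erase u := by
    intro w hw
    simp only [coverSet, Finset.mem_filter] at hw
    obtain ⟨-, e, he, hwe⟩ := hw
    exact Finset.mem_erase.mpr ⟨fun h => hu e he (h ▸ hwe), Finset.mem_univ w⟩
  have hle := Finset.card_le_card hss
  rw [Finset.card_erase_of_mem (Finset.mem_univ u), Finset.card_univ] at hle
  have hpos : 0 < Fintype.card V := Fintype.card_pos_iff.mpr ⟨u⟩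
  omega

noncomputable def degIn (F : Finset (Sym2 V)) (w : V) : ℕ := (F.filter (fun e => w ∈ e)).card

lemma degIn_le_one {M : Finset (Sym2 V)} (hM : IsMat M) (w : V) : degIn M w ≤ 1 := by
  rw [degIn, Finset.card_le_one]
  intro e he f hf
  simp only [Finset.mem_filter] at he hf
  by_contra hne
  exact hM e he.1 f hf.1 hne w ⟨he.2, hf.2⟩

lemma degIn_mono {F F' : Finset (Sym2 V)} (h : F ⊆ F') (w : V) : degIn F w ≤ degIn F' w :=
  Finset.card_le_card (Finset.filter_subset_filter _ h)

lemma sum_degIn {F : Finset (Sym2 V)} {G : SimpleGraph V} (hsub : F ⊆ G.edgeFinset)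
    (W : Finset V) (hW : ∀ e ∈ F, ∀ w ∈ e, w ∈ W) :
    ∑ w ∈ W, degIn F w = 2 * F.card := by
  have h1 : ∀ w ∈ W, degIn F w = ∑ e ∈ F, if w ∈ e then 1 else 0 := by
    intro w _
    rw [degIn, Finset.card_filter]
  rw [Finset.sum_congr rfl h1, Finset.sum_comm]
  have h2 : ∀ e ∈ F, (∑ w ∈ W, if w ∈ e then 1 else 0) = 2 := by
    intro e he
    rw [← Finset.card_filter]
    have h3 : W.filter (fun w => w ∈ e) = Finset.univ.filter (fun w => w ∈ e) := by
      ext w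
      simp only [Finset.mem_filter, Finset.mem_univ, true_and]
      exact ⟨fun h => h.2, fun h => ⟨hW e he w h, h⟩⟩
    rw [h3, ends_card (hsub he)]
  rw [Finset.sum_congr rfl h2, Finset.sum_const, smul_eq_mul, mul_comm]

lemma sum_degIn_color {G : SimpleGraph V} (col : G.Coloring (Fin 2))
    {F : Finset (Sym2 V)} (hsub : F ⊆ G.edgeFinset)
    (W : Finset V) (hW : ∀ e ∈ F, ∀ w ∈ e, w ∈ W) (i : Fin 2) :
    ∑ w ∈ W.filter (fun w => col w = i), degIn F w = F.card := by
  have htwo : ∀ x y z : Fin 2, x ≠ y → z = x ∨ z = y := by decide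
  have h1 : ∀ w ∈ W.filter (fun w => col w = i), degIn F w = ∑ e ∈ F, if w ∈ e then 1 else 0 :=
    fun w _ => by rw [degIn, Finset.card_filter]
  rw [Finset.sum_congr rfl h1, Finset.sum_comm]
  have h2 : ∀ e ∈ F, (∑ w ∈ W.filter (fun w => col w = i), if w ∈ e then 1 else 0) = 1 := by
    intro e he
    rw [← Finset.card_filter]
    revert he
    induction e using Sym2.ind with
    | _ a b =>
      intro he
      have hadj : G.Adj a b := G.mem_edgeSet.mp (SimpleGraph.mem_edgeFinset.mp (hsub he))
      have hcol : col a ≠ col b := col.valid hadj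
      have haW : a ∈ W := hW _ he a (Sym2.mem_mk_left a b)
      have hbW : b ∈ W := hW _ he b (Sym2.mem_mk_right a b)
      rcases htwo (col a) (col b) i hcol with hi | hi
      · have hset : (W.filter (fun w => col w = i)).filter (fun w => w ∈ s(a, b)) = {a} := by
          ext w
          simp only [Finset.mem_filter, Finset.mem_singleton, Sym2.mem_iff]
          constructor
          · rintro ⟨⟨hwW, hwc⟩, (rfl | rfl)⟩
            · rfl
            · exact absurd (hwc.trans hi) (Ne.symm hcol)
          · rintro rfl
            exact ⟨⟨haW, hi.symm⟩, Or.inl rfl⟩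
        rw [hset, Finset.card_singleton]
      · have hset : (W.filter (fun w => col w = i)).filter (fun w => w ∈ s(a, b)) = {b} := by
          ext w
          simp only [Finset.mem_filter, Finset.mem_singleton, Sym2.mem_iff]
          constructor
          · rintro ⟨⟨hwW, hwc⟩, (rfl | rfl)⟩
            · exact absurd (hwc.trans hi) hcol
            · rfl
          · rintro rfl
            exact ⟨⟨hbW, hi.symm⟩, Or.inr rfl⟩
        rw [hset, Finset.card_singleton]
  rw [Finset.sum_congr rfl h2, Finset.sum_const, smul_eq_mul, mul_one]

noncomputable def compD (u : V) (D : Finset (Sym2 V)) : Finset (Sym2 V) :=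
  D.filter (fun e => ∃ x, x ∈ e ∧ (SimpleGraph.fromEdgeSet (↑D : Set (Sym2 V))).Reachable u x)

lemma compD_subset (u : V) (D : Finset (Sym2 V)) : compD u D ⊆ D := Finset.filter_subset _ _

lemma reach_of_mem_compD {u : V} {D : Finset (Sym2 V)} {e : Sym2 V}
    (he : e ∈ compD u D) {x : V} (hx : x ∈ e) :
    (SimpleGraph.fromEdgeSet (↑D : Set (Sym2 V))).Reachable u x := by
  obtain ⟨heD, y, hy, hry⟩ := Finset.mem_filter.mp he
  by_cases hxy : y = x
  · exact hxy ▸ hry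
  · have hadj : (SimpleGraph.fromEdgeSet (↑D : Set (Sym2 V))).Adj y x := by
      rw [SimpleGraph.fromEdgeSet_adj]
      refine ⟨?_, hxy⟩
      have : e = s(y, x) := (Sym2.mem_and_mem_iff hxy).mp ⟨hy, hx⟩
      rw [← this]
      exact heD
    exact hry.trans hadj.reachable

lemma compD_closed {u : V} {D : Finset (Sym2 V)} {e f : Sym2 V}
    (he : e ∈ D) (hf : f ∈ compD u D) {x : V} (hxe : x ∈ e) (hxf : x ∈ f) :
    e ∈ compD u D :=
  Finset.mem_filter.mpr ⟨he, x, hxe, reach_of_mem_compD hf hxf⟩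

lemma mem_compD_of_mem {u : V} {D : Finset (Sym2 V)} {e : Sym2 V}
    (he : e ∈ D) (hu : u ∈ e) : e ∈ compD u D :=
  Finset.mem_filter.mpr ⟨he, u, hu, SimpleGraph.Reachable.refl u⟩

lemma compD_empty_of_isolated {u : V} {D : Finset (Sym2 V)}
    (h : ∀ e ∈ D, u ∉ e) {e : Sym2 V} (he : e ∈ compD u D) {x : V} (hx : x ∈ e) : x = u := by
  have hr := reach_of_mem_compD he hx
  obtain ⟨p⟩ := hr
  cases p with
  | nil => rfl
  | cons hadj _ =>
    rw [SimpleGraph.fromEdgeSet_adj] at hadj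
    exact absurd (Sym2.mem_mk_left _ _) (h _ (Finset.mem_coe.mp hadj.1))

lemma card_W_le_compD (u : V) (D : Finset (Sym2 V))
    (hu : u ∈ Finset.univ.filter (fun w => ∃ e ∈ compD u D, w ∈ e)) :
    (Finset.univ.filter (fun w => ∃ e ∈ compD u D, w ∈ e)).card ≤ (compD u D).card + 1 := by
  set H := SimpleGraph.fromEdgeSet (↑D : Set (Sym2 V)) with hH
  set W := Finset.univ.filter (fun w => ∃ e ∈ compD u D, w ∈ e) with hWdef
  have hreach : ∀ w ∈ W, H.Reachable u w := by
    intro w hw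
    obtain ⟨-, e, he, hwe⟩ := Finset.mem_filter.mp hw
    exact reach_of_mem_compD he hwe
  have key : ∀ w ∈ W.erase u, ∃ y, H.Adj w y ∧ H.dist u y < H.dist u w := by
    intro w hw
    obtain ⟨hwne, hwW⟩ := Finset.mem_erase.mp hw
    have hr := hreach w hwW
    obtain ⟨p, hp⟩ := hr.exists_walk_length_eq_dist
    have hpos : 0 < H.dist u w := hr.pos_dist_of_ne (Ne.symm hwne)
    cases hq : p.reverse with
    | nil =>
      exfalso
      have := congrArg SimpleGraph.Walk.length hq
      rw [SimpleGraph.Walk.length_reverse] at this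
      simp only [SimpleGraph.Walk.length_nil] at this
      omega
    | cons hadj r =>
      refine ⟨_, hadj, ?_⟩
      have h1 : H.dist u _ ≤ r.reverse.length := SimpleGraph.dist_le _
      rw [SimpleGraph.Walk.length_reverse] at h1
      have h2 : r.length + 1 = p.length := by
        have := congrArg SimpleGraph.Walk.length hq
        simpa [SimpleGraph.Walk.length_reverse] using this.symm
      omega
  set g : V → V := fun w => if h : ∃ y, H.Adj w y ∧ H.dist u y < H.dist u w then h.choose else w
    with hg
  have hgspec : ∀ w ∈ W.erase u, H.Adj w (g w) ∧ H.dist u (g w) < H.dist u w := by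
    intro w hw
    have hex := key w hw
    simp only [hg, dif_pos hex]
    exact hex.choose_spec
  have hcard : (W.erase u).card ≤ (compD u D).card := by
    apply Finset.card_le_card_of_injOn (fun w => s(w, g w))
    · intro w hw
      obtain ⟨hadj, -⟩ := hgspec w hw
      have hD : s(w, g w) ∈ D := by
        rw [SimpleGraph.fromEdgeSet_adj] at hadj
        exact Finset.mem_coe.mp hadj.1
      exact Finset.mem_filter.mpr ⟨hD, w, Sym2.mem_mk_left _ _,
        hreach w (Finset.mem_erase.mp hw).2⟩
    · intro w1 h1 w2 h2 heq
      obtain ⟨-, hd1⟩ := hgspec w1 h1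
      obtain ⟨-, hd2⟩ := hgspec w2 h2
      rcases Sym2.eq_iff.mp heq with ⟨h, -⟩ | ⟨ha, hb⟩
      · exact h
      · exfalso
        rw [← ha] at hd2
        rw [hb] at hd1
        omega
  have := Finset.card_erase_of_mem hu
  omega

/-- The key parity fact: in a bipartite graph, the alternating component of `u`
in `M ∆ N` (where `M` misses `u`, `N` misses `v`) contains no `M`-edge through `v`. -/
lemma compD_M_avoids_v {G : SimpleGraph V} (hbip : G.Colorable 2) {u v : V} (huv : G.Adj u v)
    {M N : Finset (Sym2 V)} (hMsub : M ⊆ G.edgeFinset) (hNsub : N ⊆ G.edgeFinset)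
    (hM : IsMat M) (hN : IsMat N) (hMu : ∀ e ∈ M, u ∉ e) (hNv : ∀ e ∈ N, v ∉ e) :
    ∀ f ∈ compD u (M ∆ N), f ∈ M → v ∉ f := by
  intro f hfC hfM hvf
  set D := M ∆ N with hDdef
  have hDsub : D ⊆ G.edgeFinset := by
    intro e he
    rcases Finset.mem_symmDiff.mp he with ⟨h, -⟩ | ⟨h, -⟩
    exacts [hMsub h, hNsub h]
  have hDM : ∀ e ∈ D, e ∉ N → e ∈ M := by
    intro e he hn
    rcases Finset.mem_symmDiff.mp he with ⟨h, -⟩ | ⟨h, -⟩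
    exacts [h, absurd h hn]
  set C := compD u D with hCdef
  have hne_uv : u ≠ v := huv.ne
  have huN : ∃ eu, eu ∈ N ∧ u ∈ eu ∧ eu ∈ C := by
    by_cases hiso : ∀ e ∈ D, u ∉ e
    · exact absurd (compD_empty_of_isolated hiso hfC hvf).symm hne_uv
    · push_neg at hiso
      obtain ⟨eu, heuD, hueu⟩ := hiso
      have heuN : eu ∈ N := by
        by_contra hn
        exact hMu eu (hDM eu heuD hn) hueu
      exact ⟨eu, heuN, hueu, mem_compD_of_mem heuD hueu⟩
  obtain ⟨eu, heuN, hueu, heuC⟩ := huN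
  set CM := C ∩ M with hCM
  set CN := C ∩ N with hCN
  have hCsub : C ⊆ D := compD_subset u D
  have hCunion : CM ∪ CN = C := by
    ext e
    simp only [Finset.mem_union, Finset.mem_inter, hCM, hCN]
    constructor
    · rintro (⟨h, -⟩ | ⟨h, -⟩) <;> exact h
    · intro h
      rcases Finset.mem_symmDiff.mp (hCsub h) with ⟨hm, -⟩ | ⟨hn, -⟩
      · exact Or.inl ⟨h, hm⟩
      · exact Or.inr ⟨h, hn⟩
  have hdisj : Disjoint CM CN := by
    rw [Finset.disjoint_left]
    intro e h1 h2
    obtain ⟨heC, heM⟩ := Finset.mem_inter.mp h1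
    obtain ⟨-, heN⟩ := Finset.mem_inter.mp h2
    rcases Finset.mem_symmDiff.mp (hCsub heC) with ⟨-, h⟩ | ⟨-, h⟩
    exacts [h heN, h heM]
  have hsplit : ∀ w, degIn C w = degIn CM w + degIn CN w := by
    intro w
    rw [degIn, degIn, degIn, ← Finset.card_union_of_disjoint
      (Finset.disjoint_filter_filter hdisj), ← Finset.filter_union, hCunion]
  have hCMle : ∀ w, degIn CM w ≤ 1 :=
    fun w => le_trans (degIn_mono Finset.inter_subset_right w) (degIn_le_one hM w)
  have hCNle : ∀ w, degIn CN w ≤ 1 :=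
    fun w => le_trans (degIn_mono Finset.inter_subset_right w) (degIn_le_one hN w)
  set W := Finset.univ.filter (fun w => ∃ e ∈ C, w ∈ e) with hWdef
  have hWmem : ∀ e ∈ C, ∀ w ∈ e, w ∈ W :=
    fun e he w hw => Finset.mem_filter.mpr ⟨Finset.mem_univ w, e, he, hw⟩
  have huW : u ∈ W := hWmem eu heuC u hueu
  have hvW : v ∈ W := hWmem f hfC v hvf
  have hdegCMu : degIn CM u = 0 := by
    rw [degIn, Finset.card_eq_zero, Finset.filter_eq_empty_iff]
    rintro e he
    exact hMu e (Finset.mem_inter.mp he).2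
  have hdegCNu : degIn CN u = 1 := by
    refine le_antisymm (hCNle u) (Finset.card_pos.mpr ⟨eu, ?_⟩)
    exact Finset.mem_filter.mpr ⟨Finset.mem_inter.mpr ⟨heuC, heuN⟩, hueu⟩
  have hdegCMv : degIn CM v = 1 := by
    refine le_antisymm (hCMle v) (Finset.card_pos.mpr ⟨f, ?_⟩)
    exact Finset.mem_filter.mpr ⟨Finset.mem_inter.mpr ⟨hfC, hfM⟩, hvf⟩
  have hdegCNv : degIn CN v = 0 := by
    rw [degIn, Finset.card_eq_zero, Finset.filter_eq_empty_iff]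
    rintro e he
    exact hNv e (Finset.mem_inter.mp he).2
  have hsum : ∑ w ∈ W, degIn C w = 2 * C.card :=
    sum_degIn (fun e he => hDsub (hCsub he)) W hWmem
  have hWle : W.card ≤ C.card + 1 := by
    have huW' := huW
    rw [hWdef, hCdef] at huW' ⊢
    exact card_W_le_compD u D huW'
  have hdegCu : degIn C u = 1 := by rw [hsplit]; omega
  have hdegCv : degIn C v = 1 := by rw [hsplit]; omega
  have hdeg_le2 : ∀ w, degIn C w ≤ 2 := by
    intro w
    have h1 := hCMle w
    have h2 := hCNle w
    rw [hsplit]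
    omega
  have hdeg_ge1 : ∀ w ∈ W, 1 ≤ degIn C w := by
    intro w hw
    rw [hWdef] at hw
    obtain ⟨-, e, he, hwe⟩ := Finset.mem_filter.mp hw
    rw [degIn]
    exact Finset.card_pos.mpr ⟨e, Finset.mem_filter.mpr ⟨he, hwe⟩⟩
  set S1 := W.filter (fun w => degIn C w = 1) with hS1
  have hsumle : 2 * C.card + S1.card ≤ 2 * W.card := by
    have hptwise : ∀ w ∈ W, degIn C w + (if degIn C w = 1 then 1 else 0) ≤ 2 := by
      intro w hw
      have h2 := hdeg_le2 w
      split_ifs with h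
      · omega
      · omega
    have e1 : S1.card = ∑ w ∈ W, if degIn C w = 1 then 1 else 0 := by
      rw [hS1, Finset.card_filter]
    have e3 : ∑ w ∈ W, (degIn C w + if degIn C w = 1 then 1 else 0) ≤ ∑ _w ∈ W, 2 :=
      Finset.sum_le_sum hptwise
    rw [Finset.sum_add_distrib, Finset.sum_const, smul_eq_mul] at e3
    omega
  have hS1le : S1.card ≤ 2 := by omega
  have huS1 : u ∈ S1 := Finset.mem_filter.mpr ⟨huW, hdegCu⟩
  have hvS1 : v ∈ S1 := Finset.mem_filter.mpr ⟨hvW, hdegCv⟩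
  have hS1eq : S1 = {u, v} := by
    refine (Finset.eq_of_subset_of_card_le ?_ ?_).symm
    · exact Finset.insert_subset huS1 (Finset.singleton_subset_iff.mpr hvS1)
    · rw [Finset.card_pair hne_uv]
      exact hS1le
  have hinterior : ∀ w ∈ W, w ≠ u → w ≠ v → degIn CM w = 1 ∧ degIn CN w = 1 := by
    intro w hw hwu hwv
    have h1 := hdeg_ge1 w hw
    have h2 := hdeg_le2 w
    have h3 : degIn C w ≠ 1 := by
      intro h
      have hmem : w ∈ S1 := Finset.mem_filter.mpr ⟨hw, h⟩
      rw [hS1eq, Finset.mem_insert, Finset.mem_singleton] at hmem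
      tauto
    have h4 := hsplit w
    have h5 := hCMle w
    have h6 := hCNle w
    omega
  obtain ⟨col⟩ := hbip
  have hcoluv : col u ≠ col v := col.valid huv
  have hCMsub : CM ⊆ G.edgeFinset := fun e he => hDsub (hCsub (Finset.mem_inter.mp he).1)
  have hCNsub : CN ⊆ G.edgeFinset := fun e he => hDsub (hCsub (Finset.mem_inter.mp he).1)
  have hWCM : ∀ e ∈ CM, ∀ w ∈ e, w ∈ W :=
    fun e he w hw => hWmem e (Finset.mem_inter.mp he).1 w hw
  have hWCN : ∀ e ∈ CN, ∀ w ∈ e, w ∈ W :=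
    fun e he w hw => hWmem e (Finset.mem_inter.mp he).1 w hw
  have hAcm := sum_degIn_color col hCMsub W hWCM (col u)
  have hAcn := sum_degIn_color col hCNsub W hWCN (col u)
  have hBcm := sum_degIn_color col hCMsub W hWCM (col v)
  have hBcn := sum_degIn_color col hCNsub W hWCN (col v)
  set Wu := W.filter (fun w => col w = col u) with hWu
  set Wv := W.filter (fun w => col w = col v) with hWv
  have huWu : u ∈ Wu := Finset.mem_filter.mpr ⟨huW, rfl⟩
  have hvWv : v ∈ Wv := Finset.mem_filter.mpr ⟨hvW, rfl⟩
  have hvWu : v ∉ Wu := fun h => hcoluv ((Finset.mem_filter.mp h).2).symm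
  have huWv : u ∉ Wv := fun h => hcoluv (Finset.mem_filter.mp h).2
  have hrest_u : ∀ w ∈ Wu.erase u, degIn CM w = 1 ∧ degIn CN w = 1 := by
    intro w hw
    obtain ⟨hwu, hwWu⟩ := Finset.mem_erase.mp hw
    exact hinterior w (Finset.mem_filter.mp hwWu).1 hwu (fun h => hvWu (h ▸ hwWu))
  have hrest_v : ∀ w ∈ Wv.erase v, degIn CM w = 1 ∧ degIn CN w = 1 := by
    intro w hw
    obtain ⟨hwv, hwWv⟩ := Finset.mem_erase.mp hw
    exact hinterior w (Finset.mem_filter.mp hwWv).1 (fun h => huWv (h ▸ hwWv)) hwv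
  rw [← Finset.add_sum_erase _ _ huWu, hdegCMu, zero_add,
    Finset.sum_congr rfl (fun w hw => (hrest_u w hw).1), Finset.sum_const, smul_eq_mul,
    mul_one] at hAcm
  rw [← Finset.add_sum_erase _ _ huWu, hdegCNu,
    Finset.sum_congr rfl (fun w hw => (hrest_u w hw).2), Finset.sum_const, smul_eq_mul,
    mul_one] at hAcn
  rw [← Finset.add_sum_erase _ _ hvWv, hdegCMv,
    Finset.sum_congr rfl (fun w hw => (hrest_v w hw).1), Finset.sum_const, smul_eq_mul,
    mul_one] at hBcm
  rw [← Finset.add_sum_erase _ _ hvWv, hdegCNv, zero_add,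
    Finset.sum_congr rfl (fun w hw => (hrest_v w hw).2), Finset.sum_const, smul_eq_mul,
    mul_one] at hBcn
  omega

lemma flip_isMat {M N C : Finset (Sym2 V)} (hM : IsMat M) (hN : IsMat N)
    (hCsub : C ⊆ M ∆ N)
    (hclosed : ∀ e ∈ M ∆ N, ∀ f ∈ C, ∀ x, x ∈ e → x ∈ f → e ∈ C) :
    IsMat (M ∆ C) := by
  intro e he f hf hne w hw
  obtain ⟨hwe, hwf⟩ := hw
  have hCN : ∀ g ∈ C, g ∉ M → g ∈ N := by
    intro g hg hgm
    rcases Finset.mem_symmDiff.mp (hCsub hg) with ⟨h, -⟩ | ⟨h, -⟩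
    exacts [absurd h hgm, h]
  rcases Finset.mem_symmDiff.mp he with ⟨heM, heC⟩ | ⟨heC, heM⟩ <;>
    rcases Finset.mem_symmDiff.mp hf with ⟨hfM, hfC⟩ | ⟨hfC, hfM⟩
  · exact hM e heM f hfM hne w ⟨hwe, hwf⟩
  · have hfN := hCN f hfC hfM
    by_cases heN : e ∈ N
    · exact hN e heN f hfN hne w ⟨hwe, hwf⟩
    · exact heC (hclosed e (Finset.mem_symmDiff.mpr (Or.inl ⟨heM, heN⟩)) f hfC w hwe hwf)
  · have heN := hCN e heC heM
    by_cases hfN : f ∈ N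
    · exact hN e heN f hfN hne w ⟨hwe, hwf⟩
    · exact hfC (hclosed f (Finset.mem_symmDiff.mpr (Or.inl ⟨hfM, hfN⟩)) e heC w hwf hwe)
  · exact hN e (hCN e heC heM) f (hCN f hfC hfM) hne w ⟨hwe, hwf⟩

lemma card_inter_partition {M N C : Finset (Sym2 V)} (hCsub : C ⊆ M ∆ N) :
    (C ∩ M).card + (C ∩ N).card = C.card := by
  rw [← Finset.card_union_of_disjoint]
  · congr 1
    ext e
    simp only [Finset.mem_union, Finset.mem_inter]
    constructor
    · rintro (⟨h, -⟩ | ⟨h, -⟩) <;> exact h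
    · intro h
      rcases Finset.mem_symmDiff.mp (hCsub h) with ⟨hm, -⟩ | ⟨hn, -⟩
      · exact Or.inl ⟨h, hm⟩
      · exact Or.inr ⟨h, hn⟩
  · rw [Finset.disjoint_left]
    intro e h1 h2
    obtain ⟨heC, heM⟩ := Finset.mem_inter.mp h1
    obtain ⟨-, heN⟩ := Finset.mem_inter.mp h2
    rcases Finset.mem_symmDiff.mp (hCsub heC) with ⟨-, h⟩ | ⟨-, h⟩
    exacts [h heN, h heM]

lemma card_symmDiff_eq (M C : Finset (Sym2 V)) :
    (M ∆ C).card = (M \ C).card + (C \ M).card := by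
  rw [symmDiff_def, Finset.sup_eq_union, Finset.card_union_of_disjoint disjoint_sdiff_sdiff]

lemma card_flip {M N C : Finset (Sym2 V)} (hCsub : C ⊆ M ∆ N) :
    (M ∆ C).card + (N ∆ C).card = M.card + N.card := by
  have e1 := card_symmDiff_eq M C
  have e2 := card_symmDiff_eq N C
  have e3 := Finset.card_sdiff_add_card_inter M C
  have e4 := Finset.card_sdiff_add_card_inter C M
  have e5 := Finset.card_sdiff_add_card_inter N C
  have e6 := Finset.card_sdiff_add_card_inter C N
  have e7 := card_inter_partition hCsub
  have e8 : (M ∩ C).card = (C ∩ M).card := by rw [Finset.inter_comm]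
  have e9 : (N ∩ C).card = (C ∩ N).card := by rw [Finset.inter_comm]
  omega

lemma symmDiff_flip (M N C : Finset (Sym2 V)) : (M ∆ C) ∆ (N ∆ C) = M ∆ N := by
  rw [symmDiff_assoc, symmDiff_comm N C, symmDiff_symmDiff_cancel_left]

lemma key_ineq {G : SimpleGraph V} (hbip : G.Colorable 2) {u v : V} (huv : G.Adj u v)
    {n : ℕ} (hV : Fintype.card V = 2 * n) :
    (mSet (deleteVerts G ({u} : Set V)) (n - 1)).card *
        (mSet (deleteVerts G ({v} : Set V)) (n - 1)).card ≤
      (mSet G n).card * (mSet (deleteVerts G ({u, v} : Set V)) (n - 2)).card +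
        (mSet G (n - 1)).card * (mSet (deleteVerts G ({u, v} : Set V)) (n - 1)).card := by
  classical
  have hn1 : 1 ≤ n := by
    have : 0 < Fintype.card V := Fintype.card_pos_iff.mpr ⟨u⟩
    omega
  have hne_uv : u ≠ v := huv.ne
  -- facts about pairs in the product
  have hfacts : ∀ M ∈ mSet (deleteVerts G ({u} : Set V)) (n - 1),
      ∀ N ∈ mSet (deleteVerts G ({v} : Set V)) (n - 1),
      (M ∆ compD u (M ∆ N)) ∈ mSet G ((M ∆ compD u (M ∆ N)).card) ∧
      (N ∆ compD u (M ∆ N)) ∈ mSet (deleteVerts G ({u, v} : Set V))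
        ((N ∆ compD u (M ∆ N)).card) ∧
      (M ∆ compD u (M ∆ N)).card + (N ∆ compD u (M ∆ N)).card = (n - 1) + (n - 1) ∧
      (N ∆ compD u (M ∆ N)).card + 1 ≤ n ∧ (M ∆ compD u (M ∆ N)).card ≤ n := by
    intro M hMm N hNm
    rw [mSet_deleteVerts_single, Finset.mem_filter] at hMm hNm
    obtain ⟨hMm, hMu⟩ := hMm
    obtain ⟨hNm, hNv⟩ := hNm
    obtain ⟨hMsub, hMcard, hMmat⟩ := mem_mSet.mp hMm
    obtain ⟨hNsub, hNcard, hNmat⟩ := mem_mSet.mp hNm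
    set C := compD u (M ∆ N) with hC
    have hCsub : C ⊆ M ∆ N := compD_subset u (M ∆ N)
    have hclosed : ∀ e ∈ M ∆ N, ∀ f ∈ C, ∀ x, x ∈ e → x ∈ f → e ∈ C :=
      fun e he f hf x hx hxf => compD_closed he hf hx hxf
    have hDsub : M ∆ N ⊆ G.edgeFinset := by
      intro e he
      rcases Finset.mem_symmDiff.mp he with ⟨h, -⟩ | ⟨h, -⟩
      exacts [hMsub h, hNsub h]
    have hDM : ∀ e ∈ M ∆ N, e ∉ N → e ∈ M := by
      intro e he hn
      rcases Finset.mem_symmDiff.mp he with ⟨h, -⟩ | ⟨h, -⟩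
      exacts [h, absurd h hn]
    have hMCsub : (M ∆ C) ⊆ G.edgeFinset := by
      intro e he
      rcases Finset.mem_symmDiff.mp he with ⟨h, -⟩ | ⟨h, -⟩
      exacts [hMsub h, hDsub (hCsub h)]
    have hNCsub : (N ∆ C) ⊆ G.edgeFinset := by
      intro e he
      rcases Finset.mem_symmDiff.mp he with ⟨h, -⟩ | ⟨h, -⟩
      exacts [hNsub h, hDsub (hCsub h)]
    have hMCmat : IsMat (M ∆ C) := flip_isMat hMmat hNmat hCsub hclosed
    have hNCmat : IsMat (N ∆ C) := by
      refine flip_isMat hNmat hMmat ?_ ?_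
      · rwa [symmDiff_comm]
      · intro e he f hf x hx hxf
        rw [symmDiff_comm] at he
        exact hclosed e he f hf x hx hxf
    have hNCu : ∀ e ∈ N ∆ C, u ∉ e := by
      intro e he hue
      rcases Finset.mem_symmDiff.mp he with ⟨heN, heC⟩ | ⟨heC, heN⟩
      · have heM : e ∉ M := fun h => hMu e h hue
        have heD : e ∈ M ∆ N := Finset.mem_symmDiff.mpr (Or.inr ⟨heN, heM⟩)
        exact heC (mem_compD_of_mem heD hue)
      · exact hMu e (hDM e (hCsub heC) heN) hue
    have hNCv : ∀ e ∈ N ∆ C, v ∉ e := by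
      intro e he hve
      rcases Finset.mem_symmDiff.mp he with ⟨heN, heC⟩ | ⟨heC, heN⟩
      · exact hNv e heN hve
      · exact compD_M_avoids_v hbip huv hMsub hNsub hMmat hNmat hMu hNv e heC
          (hDM e (hCsub heC) heN) hve
    have hcards : (M ∆ C).card + (N ∆ C).card = (n - 1) + (n - 1) := by
      rw [card_flip hCsub, hMcard, hNcard]
    have hNCle : (N ∆ C).card + 1 ≤ n := by
      have := isMat_card_le_avoid hNCsub hNCmat hNCu
      omega
    have hMCle : (M ∆ C).card ≤ n := by
      have := isMat_card_le hMCsub hMCmat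
      omega
    refine ⟨mem_mSet.mpr ⟨hMCsub, rfl, hMCmat⟩, ?_, hcards, hNCle, hMCle⟩
    rw [mem_mSet_deleteVerts]
    refine ⟨mem_mSet.mpr ⟨hNCsub, rfl, hNCmat⟩, ?_⟩
    intro e he w hw hwS
    rcases hwS with rfl | rfl
    · exact hNCu e he hw
    · exact hNCv e he hw
  -- the injection, split in two parts
  set Su := mSet (deleteVerts G ({u} : Set V)) (n - 1) with hSu
  set Sv := mSet (deleteVerts G ({v} : Set V)) (n - 1) with hSv
  set Φ : Finset (Sym2 V) × Finset (Sym2 V) → Finset (Sym2 V) × Finset (Sym2 V) :=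
    fun p => (p.1 ∆ compD u (p.1 ∆ p.2), p.2 ∆ compD u (p.1 ∆ p.2)) with hΦ
  have hinj : ∀ T ⊆ Su ×ˢ Sv, Set.InjOn Φ ↑T := by
    intro T hT
    intro p hp q hq heq
    have h1 : p.1 ∆ compD u (p.1 ∆ p.2) = q.1 ∆ compD u (q.1 ∆ q.2) :=
      congrArg Prod.fst heq
    have h2 : p.2 ∆ compD u (p.1 ∆ p.2) = q.2 ∆ compD u (q.1 ∆ q.2) :=
      congrArg Prod.snd heq
    have hD : p.1 ∆ p.2 = q.1 ∆ q.2 := by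
      rw [← symmDiff_flip p.1 p.2 (compD u (p.1 ∆ p.2)),
        ← symmDiff_flip q.1 q.2 (compD u (q.1 ∆ q.2)), h1, h2]
    rw [hD] at h1 h2
    have hp1 : p.1 = q.1 := by
      have := congrArg (fun s => s ∆ compD u (q.1 ∆ q.2)) h1
      simpa only [symmDiff_symmDiff_cancel_right] using this
    have hp2 : p.2 = q.2 := by
      have := congrArg (fun s => s ∆ compD u (q.1 ∆ q.2)) h2
      simpa only [symmDiff_symmDiff_cancel_right] using this
    exact Prod.ext hp1 hp2
  set T1 := (Su ×ˢ Sv).filter (fun p => (p.1 ∆ compD u (p.1 ∆ p.2)).card = n) with hT1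
  set T2 := (Su ×ˢ Sv).filter (fun p => ¬((p.1 ∆ compD u (p.1 ∆ p.2)).card = n)) with hT2
  have hsplitc : T1.card + T2.card = (Su ×ˢ Sv).card :=
    Finset.card_filter_add_card_filter_not _
  have hbound1 : T1.card ≤ ((mSet G n) ×ˢ (mSet (deleteVerts G ({u, v} : Set V)) (n - 2))).card := by
    apply Finset.card_le_card_of_injOn Φ
    · intro p hp
      simp only [hT1, Finset.mem_coe, Finset.mem_filter] at hp
      obtain ⟨hpp, hpcard⟩ := hp
      obtain ⟨hp1, hp2⟩ := Finset.mem_product.mp hpp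
      obtain ⟨f1, f2, f3, f4, f5⟩ := hfacts p.1 hp1 p.2 hp2
      rw [Finset.mem_coe, Finset.mem_product]
      constructor
      · rw [hΦ]
        simpa [hpcard] using f1
      · rw [hΦ]
        have : (p.2 ∆ compD u (p.1 ∆ p.2)).card = n - 2 := by omega
        simpa [this] using f2
    · exact hinj T1 (Finset.filter_subset _ _)
  have hbound2 : T2.card ≤ ((mSet G (n - 1)) ×ˢ (mSet (deleteVerts G ({u, v} : Set V)) (n - 1))).card := by
    apply Finset.card_le_card_of_injOn Φ
    · intro p hp
      simp only [hT2, Finset.mem_coe, Finset.mem_filter] at hp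
      obtain ⟨hpp, hpcard⟩ := hp
      obtain ⟨hp1, hp2⟩ := Finset.mem_product.mp hpp
      obtain ⟨f1, f2, f3, f4, f5⟩ := hfacts p.1 hp1 p.2 hp2
      rw [Finset.mem_coe, Finset.mem_product]
      have hm : (p.1 ∆ compD u (p.1 ∆ p.2)).card = n - 1 := by omega
      have hn2 : (p.2 ∆ compD u (p.1 ∆ p.2)).card = n - 1 := by omega
      constructor
      · rw [hΦ]
        simpa [hm] using f1
      · rw [hΦ]
        simpa [hn2] using f2
    · exact hinj T2 (Finset.filter_subset _ _)
  rw [Finset.card_product] at hbound1 hbound2 hsplitc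
  rw [← hsplitc]
  exact Nat.add_le_add hbound1 hbound2

lemma card_avoid_image {G : SimpleGraph V} (ψ : G ≃g G) (w : V) (k : ℕ) :
    ∀ M ∈ (mSet G k).filter (fun M => ∀ e ∈ M, w ∉ e),
      M.image (Sym2.map ψ) ∈ (mSet G k).filter (fun M => ∀ e ∈ M, (ψ w) ∉ e) := by
  intro M hM
  obtain ⟨hM1, hMav⟩ := Finset.mem_filter.mp hM
  obtain ⟨hsub, hcard, hmat⟩ := mem_mSet.mp hM1
  refine Finset.mem_filter.mpr ⟨mem_mSet.mpr ⟨?_, ?_, ?_⟩, ?_⟩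
  · intro e' he'
    obtain ⟨e, he, rfl⟩ := Finset.mem_image.mp he'
    rw [SimpleGraph.mem_edgeFinset]
    exact ψ.map_mem_edgeSet_iff.mpr (SimpleGraph.mem_edgeFinset.mp (hsub he))
  · rw [Finset.card_image_of_injective _ (Sym2.map.injective ψ.injective), hcard]
  · intro e' he1 f' hf1 hne w' hw'
    obtain ⟨e, he, rfl⟩ := Finset.mem_image.mp he1
    obtain ⟨f, hf, rfl⟩ := Finset.mem_image.mp hf1
    have hef : e ≠ f := fun h => hne (by rw [h])
    obtain ⟨hw'e, hw'f⟩ := hw'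
    obtain ⟨a, ha, haeq⟩ := Sym2.mem_map.mp hw'e
    obtain ⟨b, hb, hbeq⟩ := Sym2.mem_map.mp hw'f
    have hab : a = b := ψ.injective (haeq.trans hbeq.symm)
    exact hmat e he f hf hef a ⟨ha, hab ▸ hb⟩
  · intro e' he'
    obtain ⟨e, he, rfl⟩ := Finset.mem_image.mp he'
    intro hw
    obtain ⟨a, ha, haeq⟩ := Sym2.mem_map.mp hw
    have : a = w := ψ.injective haeq
    exact hMav e he (this ▸ ha)

lemma card_avoid_iso {G : SimpleGraph V} (φ : G ≃g G) (u : V) (k : ℕ) :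
    (mSet (deleteVerts G ({u} : Set V)) k).card =
      (mSet (deleteVerts G ({φ u} : Set V)) k).card := by
  rw [mSet_deleteVerts_single, mSet_deleteVerts_single]
  refine Finset.card_bij' (fun M _ => M.image (Sym2.map φ))
    (fun M _ => M.image (Sym2.map φ.symm)) ?_ ?_ ?_ ?_
  · intro M hM
    exact card_avoid_image φ u k M hM
  · intro M hM
    have h := card_avoid_image φ.symm (φ u) k M hM
    rwa [φ.symm_apply_apply] at h
  · intro M hM
    show (M.image (Sym2.map ⇑φ)).image (Sym2.map ⇑φ.symm) = M
    rw [Finset.image_image]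
    have hcomp : (Sym2.map ⇑φ.symm ∘ Sym2.map ⇑φ) = id := by
      funext e
      simp [Sym2.map_map]
    rw [hcomp, Finset.image_id]
  · intro M hM
    show (M.image (Sym2.map ⇑φ.symm)).image (Sym2.map ⇑φ) = M
    rw [Finset.image_image]
    have hcomp : (Sym2.map ⇑φ ∘ Sym2.map ⇑φ.symm) = id := by
      funext e
      simp [Sym2.map_map]
    rw [hcomp, Finset.image_id]

lemma sum_mSet_avoid (G : SimpleGraph V) {n : ℕ} (hV : Fintype.card V = 2 * n) (hn : 1 ≤ n) :
    ∑ w : V, ((mSet G (n - 1)).filter (fun M => ∀ e ∈ M, w ∉ e)).card =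
      2 * (mSet G (n - 1)).card := by
  have h1 : ∀ w : V, ((mSet G (n - 1)).filter (fun M => ∀ e ∈ M, w ∉ e)).card =
      ∑ M ∈ mSet G (n - 1), if (∀ e ∈ M, w ∉ e) then 1 else 0 :=
    fun w => Finset.card_filter _ _
  rw [Finset.sum_congr rfl (fun w _ => h1 w), Finset.sum_comm]
  have h2 : ∀ M ∈ mSet G (n - 1), (∑ w : V, if (∀ e ∈ M, w ∉ e) then 1 else 0) = 2 := by
    intro M hM
    obtain ⟨hsub, hcard, hmat⟩ := mem_mSet.mp hM
    rw [← Finset.card_filter]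
    have hfe : Finset.univ.filter (fun w => ∀ e ∈ M, w ∉ e) = Finset.univ \ coverSet M := by
      ext w
      simp only [Finset.mem_filter, Finset.mem_univ, true_and, Finset.mem_sdiff, coverSet]
      push_neg
      tauto
    rw [hfe, Finset.card_sdiff_of_subset (Finset.subset_univ _), Finset.card_univ,
      coverSet_card hsub hmat, hcard, hV]
    omega
  rw [Finset.sum_congr rfl h2, Finset.sum_const, smul_eq_mul, mul_comm]

end Stmt14Aux

theorem stmt14 {V : Type*} [Fintype V] (G : SimpleGraph V) (d n : ℕ)
    (hV : Fintype.card V = 2 * n)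
    (hreg : G.IsRegularOfDegree d) (hbip : G.Colorable 2)
    (hvt : ∀ u v : V, ∃ φ : G ≃g G, φ u = v)
    (u v : V) (huv : G.Adj u v) :
    (numMatchings G n : ℝ) * numMatchings (deleteVerts G {u, v}) (n - 2) +
        (numMatchings G (n - 1) : ℝ) * numMatchings (deleteVerts G {u, v}) (n - 1) ≥
      ((numMatchings G (n - 1) : ℝ) / (n : ℝ)) ^ 2 := by
  classical
  have hn1 : 1 ≤ n := by
    have : 0 < Fintype.card V := Fintype.card_pos_iff.mpr ⟨u⟩
    omega
  have hn0 : (n : ℝ) ≠ 0 := Nat.cast_ne_zero.mpr (by omega)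
  set xu := (Stmt14Aux.mSet (deleteVerts G ({u} : Set V)) (n - 1)).card with hxu
  have hall : ∀ w : V, (Stmt14Aux.mSet (deleteVerts G ({w} : Set V)) (n - 1)).card = xu := by
    intro w
    obtain ⟨φ, hφ⟩ := hvt u w
    have h := Stmt14Aux.card_avoid_iso φ u (n - 1)
    rw [hφ] at h
    exact h.symm
  have hsum := Stmt14Aux.sum_mSet_avoid G hV hn1
  have hterm : ∀ w : V,
      ((Stmt14Aux.mSet G (n - 1)).filter (fun M => ∀ e ∈ M, w ∉ e)).card = xu := by
    intro w
    rw [← Stmt14Aux.mSet_deleteVerts_single]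
    exact hall w
  rw [Finset.sum_congr rfl (fun w _ => hterm w), Finset.sum_const, Finset.card_univ,
    smul_eq_mul, hV] at hsum
  have hnx : n * xu = (Stmt14Aux.mSet G (n - 1)).card := by
    have h2' : 2 * (n * xu) = 2 * (Stmt14Aux.mSet G (n - 1)).card := by
      rw [← mul_assoc]
      exact hsum
    omega
  have hkey := Stmt14Aux.key_ineq hbip huv hV
  rw [← hxu, hall v] at hkey
  rw [ge_iff_le]
  have hdiv : ((numMatchings G (n - 1) : ℝ) / (n : ℝ)) = (xu : ℝ) := by
    rw [Stmt14Aux.numMatchings_eq, ← hnx]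
    push_cast
    field_simp
  rw [hdiv]
  have h2 : (xu : ℝ) ^ 2 = ((xu * xu : ℕ) : ℝ) := by push_cast; ring
  rw [h2, Stmt14Aux.numMatchings_eq G n, Stmt14Aux.numMatchings_eq G (n - 1),
    Stmt14Aux.numMatchings_eq (deleteVerts G {u, v}) (n - 2),
    Stmt14Aux.numMatchings_eq (deleteVerts G {u, v}) (n - 1)]
  exact_mod_cast hkey
end

section
/- For any graph G with vertex set S deleted, if every vertex of G has degree at most d, then M(G\S, t)·(1 + d·t)^{|S|} ≥ M(G,t) for all t ≥ 0. -/
open scoped Classical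
open Finset

lemma deleteVerts_adj {V : Type*} (G : SimpleGraph V) (A : Set V) (a b : V) :
    (deleteVerts G A).Adj a b ↔ G.Adj a b ∧ a ∉ A ∧ b ∉ A := Iff.rfl

lemma mem_edgeFinset_deleteVerts {V : Type*} [Fintype V] (G : SimpleGraph V) (A : Set V)
    (e : Sym2 V) : e ∈ (deleteVerts G A).edgeFinset ↔ e ∈ G.edgeFinset ∧ ∀ w ∈ e, w ∉ A := by
  induction e using Sym2.ind with
  | _ a b =>
    simp only [SimpleGraph.mem_edgeFinset, SimpleGraph.mem_edgeSet, deleteVerts_adj,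
      Sym2.mem_iff]
    constructor
    · rintro ⟨h, ha, hb⟩
      exact ⟨h, fun w hw => by rcases hw with rfl | rfl <;> assumption⟩
    · rintro ⟨h, hw⟩
      exact ⟨h, hw a (Or.inl rfl), hw b (Or.inr rfl)⟩

lemma degree_deleteVerts_le {V : Type*} [Fintype V] (G : SimpleGraph V) (A : Set V) (w : V) :
    (deleteVerts G A).degree w ≤ G.degree w := by
  apply Finset.card_le_card
  intro x hx
  rw [SimpleGraph.mem_neighborFinset] at hx ⊢
  exact hx.1

lemma numMatchings_zero {V : Type*} [Fintype V] (G : SimpleGraph V) : numMatchings G 0 = 1 := by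
  unfold numMatchings
  rw [Finset.card_eq_one]
  refine ⟨∅, ?_⟩
  ext M
  simp only [Finset.mem_filter, Finset.mem_powerset, Finset.card_eq_zero, Finset.mem_singleton]
  constructor
  · rintro ⟨_, rfl, _⟩; rfl
  · rintro rfl
    exact ⟨Finset.empty_subset _, rfl, by simp⟩

lemma numMatchings_succ_le {V : Type*} [Fintype V] (G : SimpleGraph V) (v : V) (k : ℕ) :
    numMatchings G (k+1) ≤ numMatchings (deleteVerts G {v}) (k+1)
      + G.degree v * numMatchings (deleteVerts G {v}) k := by
  classical
  set G' := deleteVerts G ({v} : Set V) with hG'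
  set pred := fun (M : Finset (Sym2 V)) (k : ℕ) =>
    M.card = k ∧ ∀ e ∈ M, ∀ f ∈ M, e ≠ f → ∀ w : V, ¬(w ∈ e ∧ w ∈ f) with hpred
  have hmemG : ∀ M k, M ∈ G.edgeFinset.powerset.filter (fun M => pred M k) ↔
      M ⊆ G.edgeFinset ∧ pred M k := by
    intro M k; simp [Finset.mem_filter, Finset.mem_powerset]
  have hmemG' : ∀ M k, M ∈ G'.edgeFinset.powerset.filter (fun M => pred M k) ↔
      M ⊆ G'.edgeFinset ∧ pred M k := by
    intro M k; simp [Finset.mem_filter, Finset.mem_powerset]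
  set A := G.edgeFinset.powerset.filter (fun M => pred M (k+1)) with hA
  set A₁ := A.filter (fun M => ∀ e ∈ M, v ∉ e) with hA₁
  set A₂ := A.filter (fun M => ¬ ∀ e ∈ M, v ∉ e) with hA₂
  have hsplit : A₁.card + A₂.card = A.card := by
    rw [hA₁, hA₂]
    exact Finset.card_filter_add_card_filter_not (fun M => ∀ e ∈ M, v ∉ e)
  -- A₁ bound
  have h1 : A₁.card ≤ numMatchings G' (k+1) := by
    apply Finset.card_le_card
    intro M hM
    rw [hA₁, Finset.mem_filter] at hM
    obtain ⟨hMA, hvfree⟩ := hM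
    rw [hA, Finset.mem_filter, Finset.mem_powerset] at hMA
    rw [show (G'.edgeFinset.powerset.filter (fun M => pred M (k+1))) =
      (G'.edgeFinset.powerset.filter (fun M => pred M (k+1))) from rfl, Finset.mem_filter,
      Finset.mem_powerset]
    refine ⟨fun e he => ?_, hMA.2⟩
    rw [hG', mem_edgeFinset_deleteVerts]
    exact ⟨hMA.1 he, fun w hw hwv => by
      rw [Set.mem_singleton_iff] at hwv; subst hwv; exact hvfree e he hw⟩
  -- A₂ bound
  have h2 : A₂.card ≤ G.degree v * numMatchings G' k := by
    unfold numMatchings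
    apply Finset.card_le_mul_card_image_of_maps_to
      (f := fun M => M.filter (fun e => v ∉ e))
    · -- maps to
      intro M hM
      rw [hA₂, Finset.mem_filter] at hM
      obtain ⟨hMA, hv⟩ := hM
      push_neg at hv
      obtain ⟨e₀, he₀M, he₀v⟩ := hv
      rw [hA, Finset.mem_filter, Finset.mem_powerset] at hMA
      obtain ⟨hMsub, hMcard, hMmatch⟩ := hMA
      have hPcard : (M.filter (fun e => v ∈ e)).card = 1 := by
        rw [Finset.card_eq_one]
        refine ⟨e₀, ?_⟩
        ext f
        simp only [Finset.mem_filter, Finset.mem_singleton]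
        constructor
        · rintro ⟨hfM, hfv⟩
          by_contra hne
          exact hMmatch f hfM e₀ he₀M hne v ⟨hfv, he₀v⟩
        · rintro rfl; exact ⟨he₀M, he₀v⟩
      rw [Finset.mem_filter, Finset.mem_powerset]
      refine ⟨fun e he => ?_, ?_, ?_⟩
      · rw [Finset.mem_filter] at he
        rw [hG', mem_edgeFinset_deleteVerts]
        exact ⟨hMsub he.1, fun w hw hwv => by
          rw [Set.mem_singleton_iff] at hwv; subst hwv; exact he.2 hw⟩
      · have hsp : (M.filter (fun e => v ∈ e)).card + (M.filter (fun e => v ∉ e)).card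
            = M.card := Finset.card_filter_add_card_filter_not (fun e => v ∈ e)
        rw [hPcard, hMcard] at hsp
        omega
      · intro e he f hf hne w
        rw [Finset.mem_filter] at he hf
        exact hMmatch e he.1 f hf.1 hne w
    · -- fibers
      intro N hN
      have hsub : (A₂.filter (fun M => M.filter (fun e => v ∉ e) = N)) ⊆
          (G.incidenceFinset v).image (fun e => insert e N) := by
        intro M hM
        rw [Finset.mem_filter] at hM
        obtain ⟨hMA₂, hfib⟩ := hM
        rw [hA₂, Finset.mem_filter] at hMA₂
        obtain ⟨hMA, hv⟩ := hMA₂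
        push_neg at hv
        obtain ⟨e₀, he₀M, he₀v⟩ := hv
        rw [hA, Finset.mem_filter, Finset.mem_powerset] at hMA
        obtain ⟨hMsub, hMcard, hMmatch⟩ := hMA
        rw [Finset.mem_image]
        refine ⟨e₀, ?_, ?_⟩
        · rw [SimpleGraph.mem_incidenceFinset]
          exact ⟨(SimpleGraph.mem_edgeFinset.mp (hMsub he₀M)), he₀v⟩
        · ext f
          simp only [Finset.mem_insert]
          constructor
          · rintro (rfl | hfN)
            · exact he₀M
            · rw [← hfib, Finset.mem_filter] at hfN; exact hfN.1
          · intro hfM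
            by_cases hfv : v ∈ f
            · left
              by_contra hne
              exact hMmatch f hfM e₀ he₀M hne v ⟨hfv, he₀v⟩
            · right; rw [← hfib, Finset.mem_filter]; exact ⟨hfM, hfv⟩
      calc (A₂.filter (fun M => M.filter (fun e => v ∉ e) = N)).card
          ≤ ((G.incidenceFinset v).image (fun e => insert e N)).card :=
            Finset.card_le_card hsub
        _ ≤ (G.incidenceFinset v).card := Finset.card_image_le
        _ = G.degree v := G.card_incidenceFinset_eq_degree v
  have : numMatchings G (k+1) = A₁.card + A₂.card := by
    unfold numMatchings; rw [hsplit]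
  rw [this]
  have h2' : A₂.card ≤ G.degree v * numMatchings G' k := h2
  calc A₁.card + A₂.card ≤ numMatchings G' (k+1) + G.degree v * numMatchings G' k :=
    Nat.add_le_add h1 h2'

lemma matchGen_step {V : Type*} [Fintype V] (G : SimpleGraph V) (d : ℕ)
    (hdeg : ∀ w : V, G.degree w ≤ d) (v : V) (t : ℝ) (ht : 0 ≤ t) :
    matchGen G t ≤ matchGen (deleteVerts G {v}) t * (1 + d * t) := by
  set G' := deleteVerts G ({v} : Set V) with hG'
  set n := Fintype.card V with hn
  have hkey : ∀ k : ℕ, (numMatchings G (k+1) : ℝ) * t^(k+1) ≤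
      ((numMatchings G' (k+1) : ℝ) + d * numMatchings G' k) * t^(k+1) := by
    intro k
    apply mul_le_mul_of_nonneg_right _ (pow_nonneg ht _)
    have h2 : numMatchings G (k+1) ≤ numMatchings G' (k+1) + d * numMatchings G' k :=
      (numMatchings_succ_le G v k).trans
        (Nat.add_le_add_left (Nat.mul_le_mul (hdeg v) le_rfl) _)
    exact_mod_cast h2
  have e1 : matchGen G t = (∑ k ∈ Finset.range n, (numMatchings G (k+1):ℝ) * t^(k+1))
      + (numMatchings G 0:ℝ) * t^0 := by
    rw [matchGen]; exact Finset.sum_range_succ' _ n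
  have e2 : matchGen G' t = (∑ k ∈ Finset.range n, (numMatchings G' (k+1):ℝ) * t^(k+1))
      + (numMatchings G' 0:ℝ) * t^0 := by
    rw [matchGen]; exact Finset.sum_range_succ' _ n
  have hpartial : ∑ k ∈ Finset.range n, (numMatchings G' k : ℝ) * t^k ≤ matchGen G' t := by
    rw [matchGen]
    apply Finset.sum_le_sum_of_subset_of_nonneg (Finset.range_subset_range.mpr (Nat.le_succ n))
    intro i _ _
    positivity
  have hdt : (0:ℝ) ≤ (d:ℝ) * t := mul_nonneg (Nat.cast_nonneg d) ht
  calc matchGen G t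
      ≤ (∑ k ∈ Finset.range n, ((numMatchings G' (k+1):ℝ) + d * numMatchings G' k) * t^(k+1))
        + (numMatchings G' 0:ℝ) * t^0 := by
        rw [e1, numMatchings_zero, numMatchings_zero]
        exact add_le_add_left (Finset.sum_le_sum (fun k _ => hkey k)) _
    _ = matchGen G' t + ((d:ℝ)*t) * ∑ k ∈ Finset.range n, (numMatchings G' k:ℝ) * t^k := by
        have hterm : ∀ k ∈ Finset.range n,
            ((numMatchings G' (k+1):ℝ) + d * numMatchings G' k) * t^(k+1)
            = (numMatchings G' (k+1):ℝ) * t^(k+1) + ((d:ℝ)*t) * ((numMatchings G' k:ℝ) * t^k) := by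
          intro k _; ring
        rw [Finset.sum_congr rfl hterm, Finset.sum_add_distrib, Finset.mul_sum, e2]
        ring
    _ ≤ matchGen G' t + ((d:ℝ)*t) * matchGen G' t :=
        add_le_add_right (mul_le_mul_of_nonneg_left hpartial hdt) _
    _ = matchGen G' t * (1 + d*t) := by ring

theorem stmt16 {V : Type*} [Fintype V] (G : SimpleGraph V) (d : ℕ)
    (hdeg : ∀ v : V, G.degree v ≤ d) (S : Finset V) (t : ℝ) (ht : 0 ≤ t) :
    matchGen G t ≤ matchGen (deleteVerts G ↑S) t * (1 + d * t) ^ S.card := by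
  induction S using Finset.induction_on with
  | empty =>
    have hE : deleteVerts G ((∅ : Finset V) : Set V) = G := by
      ext a b; simp [deleteVerts_adj]
    rw [hE]
    simp
  | @insert a s ha ih =>
    have hdeg' : ∀ w : V, (deleteVerts G ↑s).degree w ≤ d :=
      fun w => (degree_deleteVerts_le G _ w).trans (hdeg w)
    have h1 := matchGen_step (deleteVerts G ↑s) d hdeg' a t ht
    have h2 : deleteVerts (deleteVerts G ↑s) {a} = deleteVerts G ↑(insert a s) := by
      ext x y
      simp only [deleteVerts_adj, Finset.coe_insert, Set.mem_insert_iff, Set.mem_singleton_iff]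
      tauto
    rw [h2] at h1
    have hpow : (0:ℝ) ≤ (1 + d*t) ^ s.card :=
      pow_nonneg (by nlinarith [mul_nonneg (Nat.cast_nonneg d) ht]) _
    rw [Finset.card_insert_of_notMem ha]
    calc matchGen G t ≤ matchGen (deleteVerts G ↑s) t * (1+d*t)^s.card := ih
      _ ≤ (matchGen (deleteVerts G ↑(insert a s)) t * (1+d*t)) * (1+d*t)^s.card :=
        mul_le_mul_of_nonneg_right h1 hpow
      _ = matchGen (deleteVerts G ↑(insert a s)) t * (1+d*t)^(s.card+1) := by ring
end
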